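/- Let χ = aχ₀ + bψ₁ + cψ be a character of G_y with c = 0, a ≠ 0 and b ≠ 0. Then [χ] ∈ Σ¹(G_y); that is, for any finite generating set S of G_y, the full subgraph of the Cayley graph Γ(G_y, S) spanned by the elements h with χ(h) ≥ 0 is connected. -/

import Mathlib

namespace LodhaMoore

/-- Infinite binary sequences `2^ℕ`. -/
abbrev Seq : Type := ℕ → Bool

/-- The underlying function of the basic bijection `x`:
`00η ↦ 0η`, `01η ↦ 10η`, `1η ↦ 11η` (reading `false` as `0` and `true` as `1`). -/
def xFun (ξ : Seq) : Seq := fun n =>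
  if ξ 0 then
    match n with
    | 0 => true
    | 1 => true
    | n+2 => ξ (n+1)
  else if ξ 1 then
    match n with
    | 0 => true
    | 1 => false
    | n+2 => ξ (n+2)
  else
    match n with
    | 0 => false
    | n+1 => ξ (n+2)

/-- The inverse of `xFun`: `0η ↦ 00η`, `10η ↦ 01η`, `11η ↦ 1η`. -/
def xInv (ξ : Seq) : Seq := fun n =>
  if ξ 0 then
    if ξ 1 then
      match n with
      | 0 => true
      | n+1 => ξ (n+2)
    else
      match n with
      | 0 => false
      | 1 => true
      | n+2 => ξ (n+2)
  else
    match n with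
    | 0 => false
    | 1 => false
    | n+2 => ξ (n+1)

/-- `yAux true n ξ` is the `n`-th bit of `ξ.y`, and `yAux false n ξ` is the `n`-th bit of
`ξ.y⁻¹`, where `y` is defined by `00η ↦ 0(η.y)`, `01η ↦ 10(η.y⁻¹)`, `1η ↦ 11(η.y)`,
so `y⁻¹` is given by `0η ↦ 00(η.y⁻¹)`, `10η ↦ 01(η.y)`, `11η ↦ 1(η.y⁻¹)`. -/
def yAux : Bool → ℕ → Seq → Bool
  | true, 0, ξ => if ξ 0 then true else if ξ 1 then true else false
  | true, 1, ξ => if ξ 0 then true else if ξ 1 then false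
      else yAux true 0 (fun k => ξ (k+2))
  | true, n+2, ξ =>
      if ξ 0 then yAux true n (fun k => ξ (k+1))
      else if ξ 1 then yAux false n (fun k => ξ (k+2))
      else yAux true (n+1) (fun k => ξ (k+2))
  | false, 0, ξ => if ξ 0 then (if ξ 1 then true else false) else false
  | false, 1, ξ => if ξ 0 then (if ξ 1 then yAux false 0 (fun k => ξ (k+2)) else true)
      else false
  | false, n+2, ξ =>
      if ξ 0 then
        (if ξ 1 then yAux false (n+1) (fun k => ξ (k+2))
         else yAux true n (fun k => ξ (k+2)))
      else yAux false n (fun k => ξ (k+1))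

lemma yAux_inv (n : ℕ) :
    ∀ ξ : Seq, (yAux false n (fun k => yAux true k ξ) = ξ n) ∧
      (yAux true n (fun k => yAux false k ξ) = ξ n) := by
  induction n using Nat.strong_induction_on with
  | _ n IH =>
    intro ξ
    constructor
    · cases h0 : ξ 0 <;> cases h1 : ξ 1 <;> rcases n with _ | _ | n <;>
        simp [yAux, h0, h1]
      · have e : (fun k => yAux true (k+1) ξ) = fun k => yAux true k (fun j => ξ (j+2)) :=
          funext fun k => by cases k <;> simp [yAux, h0, h1]
        rw [e]; exact (IH n (by omega) _).1
      · exact (IH n (by omega) _).2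
      · intro h2 h3; simp_all
      · exact (IH (n+1) (by omega) _).1
      · exact (IH (n+1) (by omega) _).1
    · cases h0 : ξ 0 <;> cases h1 : ξ 1 <;> rcases n with _ | _ | n <;>
        simp [yAux, h0, h1]
      · exact (IH (n+1) (by omega) _).2
      · cases h2 : ξ 2 <;> simp [h2]
      · exact (IH (n+1) (by omega) _).2
      · exact (IH n (by omega) _).1
      · have e : (fun k => yAux false (k+1) ξ) = fun k => yAux false k (fun j => ξ (j+2)) :=
          funext fun k => by cases k <;> simp [yAux, h0, h1]
        rw [e]; exact (IH n (by omega) _).2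

/-- The basic bijection `x` of `2^ℕ`. -/
def xPerm : Equiv.Perm Seq where
  toFun := xFun
  invFun := xInv
  left_inv := by
    intro ξ
    funext n
    cases h0 : ξ 0 <;> cases h1 : ξ 1 <;>
      rcases n with _ | _ | n <;>
      simp [xFun, xInv, h0, h1]
  right_inv := by
    intro ξ
    funext n
    cases h0 : ξ 0 <;> cases h1 : ξ 1 <;>
      rcases n with _ | _ | n <;>
      simp [xFun, xInv, h0, h1]

/-- The basic bijection `y` of `2^ℕ`. -/
def yPerm : Equiv.Perm Seq where
  toFun ξ := fun n => yAux true n ξ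
  invFun ξ := fun n => yAux false n ξ
  left_inv ξ := funext fun n => (yAux_inv n ξ).1
  right_inv ξ := funext fun n => (yAux_inv n ξ).2

/-- Prepend a finite word to an infinite sequence. -/
def append (s : List Bool) (ξ : Seq) : Seq := fun n =>
  if h : n < s.length then s.get ⟨n, h⟩ else ξ (n - s.length)

/-- Drop the first `k` letters of an infinite sequence. -/
def dropN (k : ℕ) (ξ : Seq) : Seq := fun n => ξ (n + k)

/-- `hasPrefix s ξ` iff the finite word `s` is a prefix of `ξ`. -/
def hasPrefix (s : List Bool) (ξ : Seq) : Prop := ∀ i : Fin s.length, ξ i = s.get i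

instance (s : List Bool) (ξ : Seq) : Decidable (hasPrefix s ξ) := by
  unfold hasPrefix; infer_instance

lemma hasPrefix_append (s : List Bool) (ξ : Seq) : hasPrefix s (append s ξ) := by
  intro i
  simp [append, i.isLt]

lemma dropN_append (s : List Bool) (ξ : Seq) : dropN s.length (append s ξ) = ξ := by
  funext n
  simp [dropN, append, Nat.not_lt.2 (Nat.le_add_left _ _)]

lemma append_dropN {s : List Bool} {ξ : Seq} (h : hasPrefix s ξ) :
    append s (dropN s.length ξ) = ξ := by
  funext n
  by_cases h' : n < s.length
  · simpa [append, h'] using (h ⟨n, h'⟩).symm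
  · simp [append, h', dropN, Nat.sub_add_cancel (Nat.le_of_not_lt h')]

/-- The bijection of `2^ℕ` acting as the bijection `f` "at the address `s`":
`sη ↦ s(η.f)`, and `ξ ↦ ξ` if `s` is not a prefix of `ξ`. -/
def localize (s : List Bool) (f : Equiv.Perm Seq) : Equiv.Perm Seq where
  toFun ξ := if hasPrefix s ξ then append s (f (dropN s.length ξ)) else ξ
  invFun ξ := if hasPrefix s ξ then append s (f.symm (dropN s.length ξ)) else ξ
  left_inv := by
    intro ξ
    by_cases h : hasPrefix s ξ
    · simp [h, hasPrefix_append, dropN_append, append_dropN h]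
    · simp [h]
  right_inv := by
    intro ξ
    by_cases h : hasPrefix s ξ
    · simp [h, hasPrefix_append, dropN_append, append_dropN h]
    · simp [h]

/-- The group of bijections of `2^ℕ`.  Composition is written so that in a product `g * h`
the factor `g` acts first: bijections act on the right, as in Lodha--Moore's paper. -/
abbrev M : Type := (Equiv.Perm Seq)ᵐᵒᵖ

/-- The generator `x_s`, `s ∈ 2^{<ℕ}` (a finite binary sequence, i.e. a `List Bool`). -/
def px (s : List Bool) : M := MulOpposite.op (localize s xPerm)

/-- The generator `y_s`, `s ∈ 2^{<ℕ}`. -/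
def py (s : List Bool) : M := MulOpposite.op (localize s yPerm)

/-- `t` is a word of the form `0^n`, `n ≥ 0`. -/
def allFalse (t : List Bool) : Prop := ∀ b ∈ t, b = false

/-- `t` is a word of the form `1^n`, `n ≥ 0`. -/
def allTrue (t : List Bool) : Prop := ∀ b ∈ t, b = true

instance (t : List Bool) : Decidable (allFalse t) := by unfold allFalse; infer_instance
instance (t : List Bool) : Decidable (allTrue t) := by unfold allTrue; infer_instance

/-- Addresses allowed for the `y`-generators of the Lodha–Moore group `G`. -/
def gSet : Set (List Bool) := {t | ¬ allFalse t ∧ ¬ allTrue t}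
/-- Addresses allowed for the `y`-generators of the Lodha–Moore group `G_y`. -/
def gySet : Set (List Bool) := {t | ¬ allFalse t}
/-- Addresses allowed for the `y`-generators of the Lodha–Moore group `yG`. -/
def ygSet : Set (List Bool) := {t | ¬ allTrue t}
/-- Addresses allowed for the `y`-generators of the Lodha–Moore group `yGy`. -/
def ygySet : Set (List Bool) := Set.univ

/-- The Lodha–Moore style group with `y`-generators allowed at the addresses in `A`. -/
def LM (A : Set (List Bool)) : Subgroup M :=
  Subgroup.closure (Set.range px ∪ py '' A)

/-- The Lodha–Moore group `G`. -/
def G : Subgroup M := LM gSet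
/-- The Lodha–Moore group `G_y`. -/
def Gy : Subgroup M := LM gySet
/-- The Lodha–Moore group `yG`. -/
def yG : Subgroup M := LM ygSet
/-- The Lodha–Moore group `yGy`. -/
def yGy : Subgroup M := LM ygySet

/-- The semi-deferred subgroup `H(s)` of the Lodha–Moore group `H = LM A`: the subgroup
generated by those generators of `H` whose address has `s` as a prefix. -/
def LMdef (A : Set (List Bool)) (s : List Bool) : Subgroup M :=
  Subgroup.closure ((px '' {t | s <+: t}) ∪ (py '' {t | t ∈ A ∧ s <+: t}))

lemma px_mem (A : Set (List Bool)) (s : List Bool) : px s ∈ LM A :=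
  Subgroup.subset_closure (Or.inl ⟨s, rfl⟩)

lemma py_mem {A : Set (List Bool)} {s : List Bool} (h : s ∈ A) : py s ∈ LM A :=
  Subgroup.subset_closure (Or.inr ⟨s, h, rfl⟩)

lemma px_mem_def (A : Set (List Bool)) {s t : List Bool} (h : s <+: t) :
    px t ∈ LMdef A s :=
  Subgroup.subset_closure (Or.inl ⟨t, h, rfl⟩)

lemma py_mem_def {A : Set (List Bool)} {s t : List Bool} (h1 : t ∈ A) (h2 : s <+: t) :
    py t ∈ LMdef A s :=
  Subgroup.subset_closure (Or.inr ⟨t, ⟨h1, h2⟩, rfl⟩)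

/-- The conjugate subgroup `z B z⁻¹`. -/
def conjSubgroup {H : Type*} [Group H] (z : H) (B : Subgroup H) : Subgroup H :=
  B.map (MulAut.conj z).toMonoidHom

/-- The `MulEquiv` `φ.range ≃* ⊤` used to define an ascending HNN extension. -/
noncomputable def ascEquiv {B : Type*} [Group B] (φ : B →* B) (hφ : Function.Injective φ) :
    (φ.range : Subgroup B) ≃* (⊤ : Subgroup B) :=
  (MonoidHom.ofInjective hφ).symm.trans Subgroup.topEquiv.symm

/-- The ascending HNN extension `B*_{φ,t} = ⟨B, t ∣ t⁻¹ b t = φ(b) for all b ∈ B⟩` of the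
group `B` along the injective endomorphism `φ`.  (In `HNNExtension B φ.range ⊤ (ascEquiv φ hφ)`
the defining relation is exactly `t⁻¹ * of b * t = of (φ b)` for all `b : B`.) -/
noncomputable abbrev AscHNN {B : Type*} [Group B] (φ : B →* B)
    (hφ : Function.Injective φ) : Type _ :=
  HNNExtension B φ.range ⊤ (ascEquiv φ hφ)


/-- `f : H → R` is a homomorphism from the (multiplicative) group `H` to the additive
group `R`, i.e. a character when `R = ℝ` (discrete when `R = ℤ`). -/
def IsAddChar {H : Type*} [Group H] {R : Type*} [Add R] (f : H → R) : Prop :=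
  ∀ a b, f (a * b) = f a + f b

/-- `f` is the character `χ₀` of the Lodha–Moore group `LM A`:
`χ₀(x_{0^n}) = -1`, `χ₀(x_s) = 0` for `s` not of the form `0^n`, `χ₀(y_s) = 0`. -/
def Chi0Spec (A : Set (List Bool)) {R : Type*} [Add R] [Neg R] [One R] [Zero R]
    (f : ↥(LM A) → R) : Prop :=
  IsAddChar f ∧ (∀ s, allFalse s → f ⟨px s, px_mem A s⟩ = -1) ∧
    (∀ s, ¬ allFalse s → f ⟨px s, px_mem A s⟩ = 0) ∧
    ∀ (s) (h : s ∈ A), f ⟨py s, py_mem h⟩ = 0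

/-- `f` is the character `χ₁` of the Lodha–Moore group `LM A`:
`χ₁(x_{1^n}) = 1`, `χ₁(x_s) = 0` for `s` not of the form `1^n`, `χ₁(y_s) = 0`. -/
def Chi1Spec (A : Set (List Bool)) {R : Type*} [Add R] [One R] [Zero R]
    (f : ↥(LM A) → R) : Prop :=
  IsAddChar f ∧ (∀ s, allTrue s → f ⟨px s, px_mem A s⟩ = 1) ∧
    (∀ s, ¬ allTrue s → f ⟨px s, px_mem A s⟩ = 0) ∧
    ∀ (s) (h : s ∈ A), f ⟨py s, py_mem h⟩ = 0

/-- `f` is the character `ψ₀` of the Lodha–Moore group `LM A`: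
`ψ₀(y_{0^n}) = 1`, `ψ₀(y_s) = 0` for `s` not of the form `0^n`, `ψ₀(x_s) = 0`. -/
def Psi0Spec (A : Set (List Bool)) {R : Type*} [Add R] [One R] [Zero R]
    (f : ↥(LM A) → R) : Prop :=
  IsAddChar f ∧ (∀ s, f ⟨px s, px_mem A s⟩ = 0) ∧
    (∀ (s) (h : s ∈ A), allFalse s → f ⟨py s, py_mem h⟩ = 1) ∧
    ∀ (s) (h : s ∈ A), ¬ allFalse s → f ⟨py s, py_mem h⟩ = 0

/-- `f` is the character `ψ₁` of the Lodha–Moore group `LM A`: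
`ψ₁(y_{1^n}) = 1`, `ψ₁(y_s) = 0` for `s` not of the form `1^n`, `ψ₁(x_s) = 0`. -/
def Psi1Spec (A : Set (List Bool)) {R : Type*} [Add R] [One R] [Zero R]
    (f : ↥(LM A) → R) : Prop :=
  IsAddChar f ∧ (∀ s, f ⟨px s, px_mem A s⟩ = 0) ∧
    (∀ (s) (h : s ∈ A), allTrue s → f ⟨py s, py_mem h⟩ = 1) ∧
    ∀ (s) (h : s ∈ A), ¬ allTrue s → f ⟨py s, py_mem h⟩ = 0

/-- `f` is the character `ψ` of the Lodha–Moore group `LM A`: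
`ψ(y_s) = 1` and `ψ(x_s) = 0` for all `s`. -/
def PsiSpec (A : Set (List Bool)) {R : Type*} [Add R] [One R] [Zero R]
    (f : ↥(LM A) → R) : Prop :=
  IsAddChar f ∧ (∀ s, f ⟨px s, px_mem A s⟩ = 0) ∧
    ∀ (s) (h : s ∈ A), f ⟨py s, py_mem h⟩ = 1

/-- The full subgraph of the Cayley graph `Γ(H, S)` spanned by the vertices `h`
with `0 ≤ χ h`. -/
def posSubgraph {H : Type*} [Group H] (S : Set H) (χ : H → ℝ) :
    SimpleGraph {h : H // 0 ≤ χ h} where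
  Adj a b := a ≠ b ∧ ∃ s, (s ∈ S ∨ s⁻¹ ∈ S) ∧ (b : H) = (a : H) * s
  symm := by
    refine ⟨?_⟩
    rintro a b ⟨hne, s, hs, hb⟩
    refine ⟨hne.symm, s⁻¹, ?_, ?_⟩
    · rcases hs with h | h
      · exact Or.inr (by simpa using h)
      · exact Or.inl h
    · rw [hb]; group
  loopless := ⟨fun a h => h.1 rfl⟩

/-! ### Toolkit: sequences -/

/-- Prepend one letter to an infinite sequence. -/
def consS (b : Bool) (ξ : Seq) : Seq := fun n => match n with
  | 0 => b
  | n+1 => ξ n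

@[simp] lemma consS_zero (b : Bool) (ξ : Seq) : consS b ξ 0 = b := rfl
@[simp] lemma consS_succ (b : Bool) (ξ : Seq) (n : ℕ) : consS b ξ (n+1) = ξ n := rfl

lemma consS_tail (b : Bool) (ξ : Seq) : (fun k => consS b ξ (k+1)) = ξ := rfl

@[simp] lemma append_nil_seq (ξ : Seq) : append [] ξ = ξ := by
  funext n; simp [append]

lemma append_cons_seq (b : Bool) (s : List Bool) (ξ : Seq) :
    append (b :: s) ξ = consS b (append s ξ) := by
  funext n
  rcases n with _ | n
  · simp [append]
  · rcases lt_or_ge n s.length with h | h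
    · simp [append, h, Nat.succ_lt_succ h]
    · simp [append, Nat.not_lt.2 h, Nat.not_lt.2 (Nat.succ_le_succ h), Nat.succ_sub_succ]

lemma append_append_seq (s t : List Bool) (ξ : Seq) :
    append (s ++ t) ξ = append s (append t ξ) := by
  induction s with
  | nil => simp
  | cons b s ih => rw [List.cons_append, append_cons_seq, append_cons_seq, ih]

/-- `0^N η`. -/
def zc (N : ℕ) (η : Seq) : Seq := append (List.replicate N false) η
/-- `1^N η`. -/
def oc (N : ℕ) (η : Seq) : Seq := append (List.replicate N true) η

@[simp] lemma zc_zero (η : Seq) : zc 0 η = η := by simp [zc]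
@[simp] lemma oc_zero (η : Seq) : oc 0 η = η := by simp [oc]

lemma zc_succ (N : ℕ) (η : Seq) : zc (N+1) η = consS false (zc N η) := by
  rw [zc, List.replicate_succ, append_cons_seq]; rfl
lemma oc_succ (N : ℕ) (η : Seq) : oc (N+1) η = consS true (oc N η) := by
  rw [oc, List.replicate_succ, append_cons_seq]; rfl

lemma zc_add (M N : ℕ) (η : Seq) : zc (M+N) η = zc M (zc N η) := by
  rw [zc, zc, zc, List.replicate_add, append_append_seq]
lemma oc_add (M N : ℕ) (η : Seq) : oc (M+N) η = oc M (oc N η) := by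
  rw [oc, oc, oc, List.replicate_add, append_append_seq]

lemma zc_apply_lt {i N : ℕ} (h : i < N) (η : Seq) : zc N η i = false := by
  have : i < (List.replicate N false).length := by simpa using h
  rw [zc, append, dif_pos this]; simp
lemma oc_apply_lt {i N : ℕ} (h : i < N) (η : Seq) : oc N η i = true := by
  have : i < (List.replicate N true).length := by simpa using h
  rw [oc, append, dif_pos this]; simp

/-! ### Toolkit: the basic maps on cones -/

lemma xF_00 (ξ : Seq) : xFun (consS false (consS false ξ)) = consS false ξ := by
  funext n; rcases n with _ | _ | n <;> simp [xFun]
lemma xF_01 (ξ : Seq) : xFun (consS false (consS true ξ)) = consS true (consS false ξ) := by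
  funext n; rcases n with _ | _ | n <;> simp [xFun]
lemma xF_1 (ξ : Seq) : xFun (consS true ξ) = consS true (consS true ξ) := by
  funext n; rcases n with _ | _ | n <;> simp [xFun]
lemma xI_0 (ξ : Seq) : xInv (consS false ξ) = consS false (consS false ξ) := by
  funext n; rcases n with _ | _ | n <;> simp [xInv]
lemma xI_10 (ξ : Seq) : xInv (consS true (consS false ξ)) = consS false (consS true ξ) := by
  funext n; rcases n with _ | _ | n <;> simp [xInv]
lemma xI_11 (ξ : Seq) : xInv (consS true (consS true ξ)) = consS true ξ := by
  funext n; rcases n with _ | n <;> simp [xInv]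

/-- `ξ.y` as a plain function. -/
def yF (ξ : Seq) : Seq := fun n => yAux true n ξ
/-- `ξ.y⁻¹` as a plain function. -/
def yI (ξ : Seq) : Seq := fun n => yAux false n ξ

lemma yF_1 (ξ : Seq) : yF (consS true ξ) = consS true (consS true (yF ξ)) := by
  funext n; rcases n with _ | _ | n <;> simp [yF, yAux]
lemma yF_00 (ξ : Seq) : yF (consS false (consS false ξ)) = consS false (yF ξ) := by
  funext n; rcases n with _ | _ | n <;> simp [yF, yAux] <;> by_cases h : ξ 1 = true <;> simp [h]
lemma yF_01 (ξ : Seq) : yF (consS false (consS true ξ)) = consS true (consS false (yI ξ)) := by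
  funext n; rcases n with _ | _ | n <;> simp [yF, yI, yAux]
lemma yI_0 (ξ : Seq) : yI (consS false ξ) = consS false (consS false (yI ξ)) := by
  funext n; rcases n with _ | _ | n <;> simp [yI, yAux]
lemma yI_10 (ξ : Seq) : yI (consS true (consS false ξ)) = consS false (consS true (yF ξ)) := by
  funext n; rcases n with _ | _ | n <;> simp [yF, yI, yAux]
lemma yI_11 (ξ : Seq) : yI (consS true (consS true ξ)) = consS true (yI ξ) := by
  funext n; rcases n with _ | _ | n <;> simp [yI, yAux] <;> by_cases h : ξ 1 = true <;> simp [h]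

lemma yF_yI (ξ : Seq) : yF (yI ξ) = ξ := by
  funext n; exact (yAux_inv n ξ).2
lemma yI_yF (ξ : Seq) : yI (yF ξ) = ξ := by
  funext n; exact (yAux_inv n ξ).1

lemma xF_zc (N : ℕ) (η : Seq) : xFun (zc (N+2) η) = zc (N+1) η := by
  rw [zc_succ, zc_succ, xF_00, ← zc_succ]
lemma xF_oc (N : ℕ) (η : Seq) : xFun (oc (N+1) η) = oc (N+2) η := by
  rw [oc_succ, xF_1, ← oc_succ, ← oc_succ]
lemma xI_zc (N : ℕ) (η : Seq) : xInv (zc (N+1) η) = zc (N+2) η := by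
  rw [zc_succ, xI_0, ← zc_succ, ← zc_succ]
lemma xI_oc (N : ℕ) (η : Seq) : xInv (oc (N+2) η) = oc (N+1) η := by
  rw [oc_succ, oc_succ, xI_11, ← oc_succ]

lemma yF_oc (N : ℕ) (η : Seq) : yF (oc N η) = oc (2*N) (yF η) := by
  induction N with
  | zero => simp
  | succ N ih =>
      rw [oc_succ, yF_1, ih, ← oc_succ, ← oc_succ]
      have : 2 * (N + 1) = (2 * N) + 1 + 1 := by ring
      rw [this]
lemma yI_oc (N : ℕ) (η : Seq) : yI (oc (2*N) η) = oc N (yI η) := by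
  have := yF_oc N (yI η)
  rw [yF_yI] at this
  rw [← this, yI_yF]
/-! ### The right action of `M` on sequences -/

/-- The underlying function of `g : M`; in a product `g * h` the factor `g` acts first. -/
def act (g : M) : Seq → Seq := fun ξ => (MulOpposite.unop g) ξ

@[simp] lemma act_one (ξ : Seq) : act 1 ξ = ξ := rfl
lemma act_mul (g h : M) (ξ : Seq) : act (g * h) ξ = act h (act g ξ) := rfl
lemma act_inv_act (g : M) (ξ : Seq) : act g⁻¹ (act g ξ) = ξ :=
  Equiv.symm_apply_apply _ _
lemma act_act_inv (g : M) (ξ : Seq) : act g (act g⁻¹ ξ) = ξ :=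
  Equiv.apply_symm_apply _ _
lemma act_injective (g : M) : Function.Injective (act g) :=
  (MulOpposite.unop g).injective
lemma act_eq_iff_eq_inv_act (g : M) (ξ ζ : Seq) : act g ξ = ζ ↔ ξ = act g⁻¹ ζ := by
  constructor
  · rintro rfl; exact (act_inv_act g ξ).symm
  · rintro rfl; exact act_act_inv g ζ
lemma M_ext {g h : M} (H : ∀ ξ, act g ξ = act h ξ) : g = h := by
  apply MulOpposite.unop_injective
  exact Equiv.ext H

/-! ### Localize lemmas -/

lemma localize_append (s : List Bool) (f : Equiv.Perm Seq) (ζ : Seq) :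
    localize s f (append s ζ) = append s (f ζ) := by
  simp [localize, hasPrefix_append, dropN_append]

lemma localize_not_prefix (s : List Bool) (f : Equiv.Perm Seq) {ξ : Seq}
    (h : ¬ hasPrefix s ξ) : localize s f ξ = ξ := by
  simp [localize, h]

lemma localize_inv (s : List Bool) (f : Equiv.Perm Seq) :
    (localize s f)⁻¹ = localize s f.symm := by
  apply Equiv.ext
  intro ξ
  rfl

lemma act_px (s : List Bool) (ξ : Seq) : act (px s) ξ = localize s xPerm ξ := rfl
lemma act_py (s : List Bool) (ξ : Seq) : act (py s) ξ = localize s yPerm ξ := rfl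
lemma act_px_inv (s : List Bool) (ξ : Seq) :
    act (px s)⁻¹ ξ = localize s xPerm.symm ξ := by
  have : (px s)⁻¹ = MulOpposite.op (localize s xPerm.symm) := by
    rw [px, ← MulOpposite.op_inv, localize_inv]
  rw [this]; rfl
lemma act_py_inv (s : List Bool) (ξ : Seq) :
    act (py s)⁻¹ ξ = localize s yPerm.symm ξ := by
  have : (py s)⁻¹ = MulOpposite.op (localize s yPerm.symm) := by
    rw [py, ← MulOpposite.op_inv, localize_inv]
  rw [this]; rfl

@[simp] lemma xPerm_apply (ξ : Seq) : xPerm ξ = xFun ξ := rfl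
@[simp] lemma xPerm_symm_apply (ξ : Seq) : xPerm.symm ξ = xInv ξ := rfl
@[simp] lemma yPerm_apply (ξ : Seq) : yPerm ξ = yF ξ := rfl
@[simp] lemma yPerm_symm_apply (ξ : Seq) : yPerm.symm ξ = yI ξ := rfl

/-! ### Prefix lemmas -/

lemma hasPrefix_rep_zc {R N : ℕ} (h : R ≤ N) (η : Seq) :
    hasPrefix (List.replicate R false) (zc N η) := by
  intro i
  have hi : (i : ℕ) < R := by simpa using i.isLt
  simp [zc_apply_lt (lt_of_lt_of_le hi h), List.getElem_replicate]
lemma hasPrefix_rep_oc {R N : ℕ} (h : R ≤ N) (η : Seq) :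
    hasPrefix (List.replicate R true) (oc N η) := by
  intro i
  have hi : (i : ℕ) < R := by simpa using i.isLt
  simp [oc_apply_lt (lt_of_lt_of_le hi h), List.getElem_replicate]

lemma zc_eq_append {R N : ℕ} (h : R ≤ N) (η : Seq) :
    zc N η = append (List.replicate R false) (zc (N - R) η) := by
  conv_lhs => rw [show N = R + (N - R) by omega]
  rw [zc_add]; rfl
lemma oc_eq_append {R N : ℕ} (h : R ≤ N) (η : Seq) :
    oc N η = append (List.replicate R true) (oc (N - R) η) := by
  conv_lhs => rw [show N = R + (N - R) by omega]
  rw [oc_add]; rfl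

lemma eq_zc_of_hasPrefix {R : ℕ} {ξ : Seq} (h : hasPrefix (List.replicate R false) ξ) :
    ∃ ζ, ξ = zc R ζ := by
  refine ⟨dropN R ξ, ?_⟩
  have := append_dropN h
  rw [List.length_replicate] at this
  exact this.symm
lemma eq_oc_of_hasPrefix {R : ℕ} {ξ : Seq} (h : hasPrefix (List.replicate R true) ξ) :
    ∃ ζ, ξ = oc R ζ := by
  refine ⟨dropN R ξ, ?_⟩
  have := append_dropN h
  rw [List.length_replicate] at this
  exact this.symm

lemma not_hasPrefix_zc {s : List Bool} (hs : ¬ allFalse s) {N : ℕ} (hN : s.length ≤ N)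
    (η : Seq) : ¬ hasPrefix s (zc N η) := by
  intro hp
  apply hs
  intro b hb
  obtain ⟨i, hi⟩ := List.mem_iff_get.1 hb
  have := hp i
  rw [zc_apply_lt (lt_of_lt_of_le i.isLt hN)] at this
  rw [← hi, ← this]
lemma not_hasPrefix_oc {s : List Bool} (hs : ¬ allTrue s) {N : ℕ} (hN : s.length ≤ N)
    (η : Seq) : ¬ hasPrefix s (oc N η) := by
  intro hp
  apply hs
  intro b hb
  obtain ⟨i, hi⟩ := List.mem_iff_get.1 hb
  have := hp i
  rw [oc_apply_lt (lt_of_lt_of_le i.isLt hN)] at this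
  rw [← hi, ← this]


lemma append_rep_zc (j m : ℕ) (η : Seq) :
    append (List.replicate j false) (zc m η) = zc (j + m) η := (zc_add j m η).symm
lemma append_rep_oc (j m : ℕ) (η : Seq) :
    append (List.replicate j true) (oc m η) = oc (j + m) η := (oc_add j m η).symm

/-! ### Action of generators on deep cones -/

lemma px_zc {j N : ℕ} (hN : j + 2 ≤ N) (η : Seq) :
    act (px (List.replicate j false)) (zc N η) = zc (N - 1) η := by
  rw [act_px, zc_eq_append (by omega : j ≤ N), localize_append]
  have h2 : N - j = (N - j - 2) + 2 := by omega
  rw [xPerm_apply, h2, xF_zc, append_rep_zc,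
    show j + (N - j - 2 + 1) = N - 1 by omega]

lemma px_inv_zc {j N : ℕ} (hN : j + 1 ≤ N) (η : Seq) :
    act (px (List.replicate j false))⁻¹ (zc N η) = zc (N + 1) η := by
  rw [act_px_inv, zc_eq_append (by omega : j ≤ N), localize_append]
  have h2 : N - j = (N - j - 1) + 1 := by omega
  rw [xPerm_symm_apply, h2, xI_zc, append_rep_zc,
    show j + (N - j - 1 + 2) = N + 1 by omega]

lemma px_oc {j N : ℕ} (hN : j + 1 ≤ N) (η : Seq) :
    act (px (List.replicate j true)) (oc N η) = oc (N + 1) η := by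
  rw [act_px, oc_eq_append (by omega : j ≤ N), localize_append]
  have h2 : N - j = (N - j - 1) + 1 := by omega
  rw [xPerm_apply, h2, xF_oc, append_rep_oc,
    show j + (N - j - 1 + 2) = N + 1 by omega]

lemma px_inv_oc {j N : ℕ} (hN : j + 2 ≤ N) (η : Seq) :
    act (px (List.replicate j true))⁻¹ (oc N η) = oc (N - 1) η := by
  rw [act_px_inv, oc_eq_append (by omega : j ≤ N), localize_append]
  have h2 : N - j = (N - j - 2) + 2 := by omega
  rw [xPerm_symm_apply, h2, xI_oc, append_rep_oc,
    show j + (N - j - 2 + 1) = N - 1 by omega]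

lemma py_oc {j N : ℕ} (hN : j + 1 ≤ N) (η : Seq) :
    act (py (List.replicate j true)) (oc N η) = oc (2 * N - j) (yF η) := by
  rw [act_py, oc_eq_append (by omega : j ≤ N), localize_append]
  rw [yPerm_apply, yF_oc, append_rep_oc,
    show j + 2 * (N - j) = 2 * N - j by omega]

lemma py_inv_oc {j m : ℕ} (η : Seq) (hj : 0 ≤ j) :
    act (py (List.replicate j true))⁻¹ (oc (j + 2 * m) η) = oc (j + m) (yI η) := by
  rw [act_py_inv, oc_eq_append (by omega : j ≤ j + 2 * m), localize_append]
  have : j + 2 * m - j = 2 * m := by omega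
  rw [this, yPerm_symm_apply, yI_oc, append_rep_oc]

/-! ### Supports and commutation -/

/-- `g` moves only points in the cone at `s`. -/
def SuppIn (s : List Bool) (g : M) : Prop := ∀ ξ, ¬ hasPrefix s ξ → act g ξ = ξ

lemma SuppIn.one (s : List Bool) : SuppIn s 1 := fun _ _ => rfl
lemma SuppIn.mul {s : List Bool} {g h : M} (hg : SuppIn s g) (hh : SuppIn s h) :
    SuppIn s (g * h) := by
  intro ξ hξ
  rw [act_mul, hg ξ hξ, hh ξ hξ]
lemma SuppIn.inv {s : List Bool} {g : M} (hg : SuppIn s g) : SuppIn s g⁻¹ := by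
  intro ξ hξ
  conv_lhs => rw [← hg ξ hξ]
  exact act_inv_act g ξ
lemma SuppIn.pow {s : List Bool} {g : M} (hg : SuppIn s g) (n : ℕ) : SuppIn s (g ^ n) := by
  induction n with
  | zero => exact SuppIn.one s
  | succ n ih => rw [pow_succ]; exact ih.mul hg
lemma SuppIn.zpow {s : List Bool} {g : M} (hg : SuppIn s g) (n : ℤ) : SuppIn s (g ^ n) := by
  rcases n with n | n
  · exact hg.pow n
  · rw [zpow_negSucc]; exact (hg.pow (n+1)).inv

/-- `g` maps the cone at `s` into itself whenever it is supported there. -/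
lemma SuppIn.mem_cone {s : List Bool} {g : M} (hg : SuppIn s g) {ξ : Seq}
    (h : ¬ hasPrefix s ξ) : ¬ hasPrefix s (act g ξ) := by
  rwa [hg ξ h]

lemma SuppIn.stable {s : List Bool} {g : M} (hg : SuppIn s g) {ξ : Seq}
    (h : hasPrefix s ξ) : hasPrefix s (act g ξ) := by
  by_contra hc
  have h1 : act g (act g ξ) = act g ξ := hg _ hc
  have := act_injective g h1
  rw [this] at hc
  exact hc h

/-- If `g` is supported in the cone at `s` and `h` fixes that cone pointwise,
then `g` and `h` commute. -/
lemma commute_suppIn_fix {s : List Bool} {g h : M} (hg : SuppIn s g)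
    (hh : ∀ ξ, hasPrefix s ξ → act h ξ = ξ) : g * h = h * g := by
  apply M_ext
  intro ξ
  rw [act_mul, act_mul]
  by_cases hp : hasPrefix s ξ
  · rw [hh ξ hp, hh _ (hg.stable hp)]
  · rw [hg ξ hp]
    have hζ : ¬ hasPrefix s (act h ξ) := by
      intro hp2
      have h1 : act h (act h ξ) = act h ξ := hh _ hp2
      have h2 := act_injective h h1
      rw [h2] at hp2
      exact hp hp2
    rw [hg _ hζ]
/-! ### Germs at `0^∞`: exact shifts -/

/-- `g` acts on sufficiently deep all-zero cones as the exact shift `0^{N+u}η ↦ 0^{N+v}η`. -/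
def Germ0 (g : M) (u v : ℕ) : Prop :=
  ∃ M0 : ℕ, ∀ N, M0 ≤ N → ∀ η, act g (zc (N + u) η) = zc (N + v) η

lemma Germ0.one : Germ0 1 0 0 := ⟨0, fun _ _ _ => rfl⟩

lemma Germ0.mul {g g' : M} {u v u' v' : ℕ} (h : Germ0 g u v) (h' : Germ0 g' u' v') :
    Germ0 (g * g') (u + u') (v + v') := by
  obtain ⟨A, hA⟩ := h
  obtain ⟨B, hB⟩ := h'
  refine ⟨A + B, fun N hN η => ?_⟩
  rw [act_mul, show N + (u + u') = (N + u') + u by omega, hA _ (by omega),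
    show N + u' + v = (N + v) + u' by omega, hB _ (by omega), add_assoc]

lemma Germ0.inv {g : M} {u v : ℕ} (h : Germ0 g u v) : Germ0 g⁻¹ v u := by
  obtain ⟨A, hA⟩ := h
  refine ⟨A, fun N hN η => ?_⟩
  rw [← hA N hN η, act_inv_act]

lemma Germ0.pow {g : M} {u v : ℕ} (h : Germ0 g u v) (K : ℕ) :
    Germ0 (g ^ K) (K * u) (K * v) := by
  induction K with
  | zero => simpa using Germ0.one
  | succ K ih =>
      rw [pow_succ]
      have := ih.mul h
      rwa [show K * u + u = (K+1) * u by ring, show K * v + v = (K+1) * v by ring] at this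

/-! ### Germs at `1^∞`: deep realizers -/

/-- `c` maps deep all-one cones into arbitrarily deep all-one cones. -/
def Proper1 (c : M) : Prop :=
  ∀ T : ℕ, ∃ R : ℕ, ∀ N, R ≤ N → ∀ η, ∃ N', T ≤ N' ∧ ∃ η', act c (oc N η) = oc N' η'

lemma Proper1.one : Proper1 1 := fun T => ⟨T, fun N hN η => ⟨N, hN, η, rfl⟩⟩

lemma Proper1.mul {c c' : M} (h : Proper1 c) (h' : Proper1 c') : Proper1 (c * c') := by
  intro T
  obtain ⟨R', hR'⟩ := h' T
  obtain ⟨R, hR⟩ := h R'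
  refine ⟨R, fun N hN η => ?_⟩
  obtain ⟨N1, hN1, η1, hη1⟩ := hR N hN η
  obtain ⟨N2, hN2, η2, hη2⟩ := hR' N1 hN1 η1
  exact ⟨N2, hN2, η2, by rw [act_mul, hη1, hη2]⟩

/-- The class of one-sided deep elements used as realizers of germs at `1^∞`. -/
def D1 (c : M) : Prop :=
  c ∈ Gy ∧ SuppIn [true] c ∧ Proper1 c ∧ Proper1 c⁻¹

lemma D1.one : D1 1 := ⟨Subgroup.one_mem _, SuppIn.one _, Proper1.one, by
  rw [inv_one]; exact Proper1.one⟩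

lemma D1.mul {c c' : M} (h : D1 c) (h' : D1 c') : D1 (c * c') :=
  ⟨Subgroup.mul_mem _ h.1 h'.1, h.2.1.mul h'.2.1, h.2.2.1.mul h'.2.2.1, by
    rw [mul_inv_rev]; exact h'.2.2.2.mul h.2.2.2⟩

lemma D1.inv {c : M} (h : D1 c) : D1 c⁻¹ :=
  ⟨Subgroup.inv_mem _ h.1, h.2.1.inv, h.2.2.2, by rw [inv_inv]; exact h.2.2.1⟩

/-- `g` acts as `c` on a sufficiently deep all-one cone. -/
def Realizes1 (g c : M) : Prop :=
  ∃ M1 : ℕ, ∀ N, M1 ≤ N → ∀ η, act g (oc N η) = act c (oc N η)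

/-- `g` has a one-sided deep realizer at `1^∞`. -/
def Germ1 (g : M) : Prop := ∃ c, D1 c ∧ Realizes1 g c

lemma Germ1.one : Germ1 1 := ⟨1, D1.one, 0, fun _ _ _ => rfl⟩

lemma Germ1.mul {g g' : M} (h : Germ1 g) (h' : Germ1 g') : Germ1 (g * g') := by
  obtain ⟨c, hc, A, hA⟩ := h
  obtain ⟨c', hc', B, hB⟩ := h'
  obtain ⟨R, hR⟩ := hc.2.2.1 B
  refine ⟨c * c', hc.mul hc', max A R, fun N hN η => ?_⟩
  rw [act_mul, act_mul, hA N (le_trans (le_max_left _ _) hN) η]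
  obtain ⟨N', hN', η', hη'⟩ := hR N (le_trans (le_max_right _ _) hN) η
  rw [hη', hB N' hN' η']

lemma Germ1.inv {g : M} (h : Germ1 g) : Germ1 g⁻¹ := by
  obtain ⟨c, hc, A, hA⟩ := h
  obtain ⟨R, hR⟩ := hc.2.2.2 A
  refine ⟨c⁻¹, hc.inv, R, fun N hN η => ?_⟩
  obtain ⟨N', hN', η', hη'⟩ := hR N hN η
  rw [hη']
  have h2 : act g (oc N' η') = oc N η := by
    rw [hA N' hN' η', ← hη', act_act_inv]
  rw [← h2, act_inv_act]

/-! ### The combined germ package, by closure induction -/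

def PkgM (g : M) : Prop := (∃ u v, Germ0 g u v) ∧ Germ1 g

lemma hasPrefix_mono {s t : List Bool} (h : s <+: t) {ξ : Seq}
    (ht : hasPrefix t ξ) : hasPrefix s ξ := by
  obtain ⟨r, rfl⟩ := h
  intro i
  have hi : (i : ℕ) < (s ++ r).length := by
    simp only [List.length_append]
    omega
  have := ht ⟨i, hi⟩
  rw [this]
  simp [List.getElem_append, i.isLt]

lemma suppIn_localize {s t : List Bool} (h : s <+: t) (f : Equiv.Perm Seq) :
    SuppIn s (MulOpposite.op (localize t f)) := by
  intro ξ hξ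
  have : ¬ hasPrefix t ξ := fun ht => hξ (hasPrefix_mono h ht)
  exact localize_not_prefix t f this

lemma suppIn_px {s t : List Bool} (h : s <+: t) : SuppIn s (px t) := suppIn_localize h _
lemma suppIn_py {s t : List Bool} (h : s <+: t) : SuppIn s (py t) := suppIn_localize h _

lemma allFalse_eq_replicate {s : List Bool} (h : allFalse s) :
    s = List.replicate s.length false :=
  List.eq_replicate_iff.2 ⟨rfl, h⟩
lemma allTrue_eq_replicate {s : List Bool} (h : allTrue s) :
    s = List.replicate s.length true :=
  List.eq_replicate_iff.2 ⟨rfl, h⟩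

lemma proper1_px_one : Proper1 (px [true]) := by
  intro T
  refine ⟨T + 2, fun N hN η => ⟨N + 1, by omega, η, ?_⟩⟩
  have : [true] = List.replicate 1 true := rfl
  rw [this, px_oc (by omega)]

lemma proper1_px_one_inv : Proper1 (px [true])⁻¹ := by
  intro T
  refine ⟨T + 3, fun N hN η => ⟨N - 1, by omega, η, ?_⟩⟩
  have : [true] = List.replicate 1 true := rfl
  rw [this, px_inv_oc (by omega)]

lemma d1_px_one : D1 (px [true]) :=
  ⟨px_mem _ _, suppIn_px (by simp), proper1_px_one, proper1_px_one_inv⟩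

lemma proper1_py_rep (j : ℕ) : Proper1 (py (List.replicate j true)) := by
  intro T
  refine ⟨T + j + 1, fun N hN η => ⟨2 * N - j, by omega, yF η, ?_⟩⟩
  rw [py_oc (by omega)]

lemma proper1_py_rep_inv (j : ℕ) : Proper1 (py (List.replicate j true))⁻¹ := by
  intro T
  refine ⟨2 * T + j + 2, fun N hN η => ?_⟩
  obtain ⟨m, hm⟩ : ∃ m, N = j + 2 * m ∨ N = j + 2 * m + 1 := ⟨(N - j) / 2, by omega⟩
  rcases hm with hm | hm
  · refine ⟨j + m, by omega, yI η, ?_⟩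
    rw [hm, py_inv_oc _ (by omega)]
  · refine ⟨j + m, by omega, yI (oc 1 η), ?_⟩
    rw [hm, show j + 2*m + 1 = (j + 2*m) + 1 by omega, oc_add, ← py_inv_oc (oc 1 η) (by omega)]

lemma d1_py_rep {j : ℕ} (hj : 1 ≤ j) : D1 (py (List.replicate j true)) := by
  refine ⟨py_mem ?_, suppIn_py ?_, proper1_py_rep j, proper1_py_rep_inv j⟩
  · intro hf
    have := hf true (by
      rw [show (List.replicate j true) = true :: List.replicate (j-1) true by
        conv_lhs => rw [show j = 1 + (j-1) by omega]
        simp [List.replicate_add]]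
      exact List.mem_cons_self)
    simp at this
  · refine ⟨List.replicate (j-1) true, ?_⟩
    show true :: List.replicate (j-1) true = List.replicate j true
    rw [← List.replicate_succ, show j - 1 + 1 = j by omega]

/-- The germ package holds for every element of `G_y`. -/
lemma pkgM_of_mem {g : M} (hg : g ∈ Gy) : PkgM g := by
  refine Subgroup.closure_induction ?_ ?_ ?_ ?_ hg
  · rintro x (⟨s, rfl⟩ | ⟨t, ht, rfl⟩)
    · -- generators x_s
      constructor
      · by_cases hf : allFalse s
        · refine ⟨1, 0, s.length + 2, fun N hN η => ?_⟩
          rw [allFalse_eq_replicate hf, px_zc (by omega),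
            show N + 1 - 1 = N + 0 by omega]
        · refine ⟨0, 0, s.length, fun N hN η => ?_⟩
          rw [act_px, localize_not_prefix _ _ (not_hasPrefix_zc hf (by omega) η)]
      · by_cases htr : allTrue s
        · refine ⟨px [true], d1_px_one, s.length + 2, fun N hN η => ?_⟩
          rw [allTrue_eq_replicate htr, px_oc (by omega)]
          have : [true] = List.replicate 1 true := rfl
          rw [act_px, this, ← px_oc (j := 1) (by omega), act_px]
        · refine ⟨1, D1.one, s.length, fun N hN η => ?_⟩
          rw [act_px, localize_not_prefix _ _ (not_hasPrefix_oc htr (by omega) η)]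
          rfl
    · -- generators y_t, t ∈ gySet
      constructor
      · refine ⟨0, 0, t.length, fun N hN η => ?_⟩
        rw [act_py, localize_not_prefix _ _ (not_hasPrefix_zc ht (by omega) η)]
      · by_cases htr : allTrue t
        · have hj : 1 ≤ t.length := by
            rcases t with _ | ⟨b, t⟩
            · exact absurd (fun b hb => by simp at hb) ht
            · simp
          refine ⟨py t, ?_, 0, fun N hN η => rfl⟩
          rw [allTrue_eq_replicate htr]
          exact d1_py_rep hj
        · refine ⟨1, D1.one, t.length, fun N hN η => ?_⟩
          rw [act_py, localize_not_prefix _ _ (not_hasPrefix_oc htr (by omega) η)]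
          rfl
  · exact ⟨⟨0, 0, Germ0.one⟩, Germ1.one⟩
  · rintro x y _ _ ⟨⟨u, v, h0⟩, h1⟩ ⟨⟨u', v', h0'⟩, h1'⟩
    exact ⟨⟨u + u', v + v', h0.mul h0'⟩, h1.mul h1'⟩
  · rintro x _ ⟨⟨u, v, h0⟩, h1⟩
    exact ⟨⟨v, u, h0.inv⟩, h1.inv⟩
/-! ### Word machinery: `Good` elements and the elevator lemma -/

section Machinery

variable {Γ : Type*} [Group Γ]

/-- `l` is a letter: a generator or the inverse of one. -/
def InS (S : Set Γ) (l : Γ) : Prop := l ∈ S ∨ l⁻¹ ∈ S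

lemma InS.inv {S : Set Γ} {l : Γ} (h : InS S l) : InS S l⁻¹ := by
  rcases h with h | h
  · exact Or.inr (by simpa using h)
  · exact Or.inl h

/-- All entries of `w` are letters. -/
def WChain (S : Set Γ) (w : List Γ) : Prop := ∀ l ∈ w, InS S l

variable {S : Set Γ}

lemma WChain.nil : WChain S ([] : List Γ) := by intro l hl; simp at hl
lemma WChain.singleton {x : Γ} (hx : InS S x) : WChain S [x] := by
  intro l hl
  rw [List.mem_singleton] at hl
  exact hl ▸ hx
lemma WChain.append {w₁ w₂ : List Γ} (h₁ : WChain S w₁) (h₂ : WChain S w₂) :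
    WChain S (w₁ ++ w₂) := by
  intro l hl
  rcases List.mem_append.1 hl with h | h
  · exact h₁ l h
  · exact h₂ l h

/-- The `χ`-level after `n` letters of `w`. -/
def Lev (χ : Γ → ℝ) (w : List Γ) (n : ℕ) : ℝ := χ (w.take n).prod

variable {χ : Γ → ℝ}
variable (hχ : ∀ g h : Γ, χ (g * h) = χ g + χ h)

section
include hχ

lemma chi_one : χ (1 : Γ) = 0 := by
  have := hχ 1 1
  rw [mul_one] at this
  linarith

lemma chi_inv (g : Γ) : χ g⁻¹ = -χ g := by
  have := hχ g g⁻¹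
  rw [mul_inv_cancel, chi_one hχ] at this
  linarith

lemma chi_pow (g : Γ) (K : ℕ) : χ (g ^ K) = K * χ g := by
  induction K with
  | zero => simpa using chi_one hχ
  | succ K ih => rw [pow_succ, hχ, ih]; push_cast; ring

lemma lev_zero (w : List Γ) : Lev χ w 0 = 0 := by
  simp [Lev, chi_one hχ]

lemma lev_of_ge {w : List Γ} {n : ℕ} (h : w.length ≤ n) : Lev χ w n = χ w.prod := by
  rw [Lev, List.take_of_length_le h]

lemma lev_append (w₁ w₂ : List Γ) (n : ℕ) :
    Lev χ (w₁ ++ w₂) n = Lev χ w₁ n + Lev χ w₂ (n - w₁.length) := by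
  rw [Lev, List.take_append, List.prod_append, hχ]
  rfl

lemma lev_cons (x : Γ) (w : List Γ) (n : ℕ) :
    Lev χ (x :: w) (n + 1) = χ x + Lev χ w n := by
  rw [Lev, List.take_succ_cons, List.prod_cons, hχ]
  rfl

/-- Lower bound for levels of any word. -/
lemma lev_ge_neg_sum (w : List Γ) (n : ℕ) :
    -(w.map (fun l => |χ l|)).sum ≤ Lev χ w n := by
  induction w generalizing n with
  | nil => simp [Lev, chi_one hχ]
  | cons x t ih =>
      rcases n with _ | n
      · have hs : 0 ≤ (t.map (fun l => |χ l|)).sum :=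
          List.sum_nonneg (fun a ha => by
            obtain ⟨l, _, rfl⟩ := List.mem_map.1 ha
            exact abs_nonneg _)
        have : (0:ℝ) ≤ |χ x| + (t.map (fun l => |χ l|)).sum := by
          have := abs_nonneg (χ x)
          linarith
        rw [lev_zero hχ]
        simp only [List.map_cons, List.sum_cons]
        linarith
      · rw [lev_cons hχ]
        have h1 := ih n
        have h2 : -|χ x| ≤ χ x := neg_abs_le _
        simp only [List.map_cons, List.sum_cons]
        linarith

/-- Inverse words: reversing and inverting a word inverts the product and
anchors the levels at the end. -/
lemma exists_inv_word {w : List Γ} (hw : WChain S w) :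
    ∃ w', WChain S w' ∧ w'.prod = w.prod⁻¹ ∧
      ∀ B : ℝ, (∀ k, B ≤ Lev χ w k) → ∀ n, B - χ w.prod ≤ Lev χ w' n := by
  induction w with
  | nil =>
      refine ⟨[], WChain.nil, by simp, fun B hB n => ?_⟩
      have h0 := hB 0
      rw [lev_zero hχ] at h0
      simpa [Lev, chi_one hχ] using by linarith
  | cons x t ih =>
      have hx : InS S x := hw x (List.mem_cons_self)
      have ht : WChain S t := fun l hl => hw l (List.mem_cons_of_mem _ hl)
      obtain ⟨t', ht', htp, hlev⟩ := ih ht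
      refine ⟨t' ++ [x⁻¹], ht'.append (WChain.singleton hx.inv), ?_, ?_⟩
      · rw [List.prod_append, htp]
        simp [mul_inv_rev]
      · intro B hB n
        have hB0 : B ≤ 0 := by
          have := hB 0
          rwa [lev_zero hχ] at this
        have hBt : ∀ k, B - χ x ≤ Lev χ t k := by
          intro k
          have := hB (k + 1)
          rw [lev_cons hχ] at this
          linarith
        have hlev' := hlev (B - χ x) hBt
        have hprod : χ (x :: t).prod = χ x + χ t.prod := by
          rw [List.prod_cons, hχ]
        rw [lev_append hχ]
        rcases le_or_gt n t'.length with hn | hn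
        · have : n - t'.length = 0 := by omega
          rw [this, lev_zero hχ]
          have := hlev' n
          rw [hprod]
          linarith
        · have h1 : Lev χ t' n = χ t'.prod := lev_of_ge hχ (by omega)
          have h2 : Lev χ [x⁻¹] (n - t'.length) = χ x⁻¹ := by
            have : 1 ≤ n - t'.length := by omega
            rw [Lev, List.take_of_length_le (by simpa using this)]
            simp
          rw [h1, h2, htp, chi_inv hχ, chi_inv hχ, hprod]
          linarith

/-- A good element: a product of letters whose partial products stay in the cone. -/
def GoodW (S : Set Γ) (χ : Γ → ℝ) (g : Γ) : Prop :=
  ∃ w, WChain S w ∧ w.prod = g ∧ ∀ n, 0 ≤ Lev χ w n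

lemma GoodW.one : GoodW S χ 1 :=
  ⟨[], WChain.nil, by simp, fun n => by simp [Lev, chi_one hχ]⟩

lemma GoodW.nonneg {g : Γ} (h : GoodW S χ g) : 0 ≤ χ g := by
  obtain ⟨w, _, rfl, hl⟩ := h
  have := hl w.length
  rwa [lev_of_ge hχ le_rfl] at this

lemma GoodW.mul {g h : Γ} (hg : GoodW S χ g)
    (hh : GoodW S χ h) : GoodW S χ (g * h) := by
  obtain ⟨w₁, hW₁, rfl, hl₁⟩ := hg
  obtain ⟨w₂, hW₂, rfl, hl₂⟩ := hh
  refine ⟨w₁ ++ w₂, hW₁.append hW₂, by simp, fun n => ?_⟩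
  rw [lev_append hχ]
  have h1 := hl₁ n
  have h2 := hl₂ (n - w₁.length)
  linarith

lemma GoodW.pow {g : Γ} (hg : GoodW S χ g) (K : ℕ) :
    GoodW S χ (g ^ K) := by
  induction K with
  | zero => simpa using GoodW.one hχ
  | succ K ih => rw [pow_succ]; exact ih.mul hχ hg

/-- The elevator lemma: climb with `p`, execute any word, descend with `q`. -/
lemma elevator {p q m : Γ} (hp : GoodW S χ p)
    (hq : GoodW S χ q)
    {wm : List Γ} (hwm : WChain S wm) (hwmp : wm.prod = m) (K K' : ℕ)
    (hdip : ∀ n, 0 ≤ (K : ℝ) * χ p + Lev χ wm n)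
    (hg : 0 ≤ χ (p ^ K * m * (q ^ K')⁻¹)) :
    GoodW S χ (p ^ K * m * (q ^ K')⁻¹) := by
  obtain ⟨w₁, hW₁, hw₁p, hl₁⟩ := hp.pow hχ K
  obtain ⟨w₂, hW₂, hw₂p, hl₂⟩ := hq.pow hχ K'
  obtain ⟨w₃, hW₃, hw₃p, hl₃⟩ := exists_inv_word hχ hW₂
  refine ⟨w₁ ++ wm ++ w₃, (hW₁.append hwm).append hW₃, ?_, ?_⟩
  · rw [List.prod_append, List.prod_append, hw₁p, hwmp, hw₃p, hw₂p, mul_assoc]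
  · intro n
    rw [lev_append hχ, lev_append hχ]
    simp only [List.length_append]
    have hl3 := hl₃ 0 hl₂ (n - (w₁.length + wm.length))
    rw [hw₂p, chi_pow hχ] at hl3
    have hKp : χ w₁.prod = (K : ℝ) * χ p := by rw [hw₁p, chi_pow hχ]
    rcases le_or_gt n w₁.length with hn | hn
    · have h2 : n - w₁.length = 0 := by omega
      have h3 : n - (w₁.length + wm.length) = 0 := by omega
      rw [h2, h3, lev_zero hχ, lev_zero hχ]
      have := hl₁ n
      linarith
    · have h1 : Lev χ w₁ n = (K:ℝ) * χ p := by rw [lev_of_ge hχ (by omega), hKp]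
      rcases le_or_gt (n - w₁.length) wm.length with hn2 | hn2
      · have h3 : n - (w₁.length + wm.length) = 0 := by omega
        rw [h1, h3, lev_zero hχ]
        have := hdip (n - w₁.length)
        linarith
      · have h2 : Lev χ wm (n - w₁.length) = χ m := by rw [lev_of_ge hχ (by omega), hwmp]
        have hχg : χ (p ^ K * m * (q ^ K')⁻¹)
            = (K:ℝ) * χ p + χ m - (K' : ℝ) * χ q := by
          rw [hχ, hχ, chi_inv hχ, chi_pow hχ, chi_pow hχ]
          ring
        rw [h1, h2]
        rw [hχg] at hg
        linarith

end

end Machinery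
section Machinery2

variable {Γ : Type*} [Group Γ] {S : Set Γ} {χ : Γ → ℝ}
variable (hχ : ∀ g h : Γ, χ (g * h) = χ g + χ h)

include hχ

lemma chi_prod_eq_sum (w : List Γ) : χ w.prod = (w.map χ).sum := by
  induction w with
  | nil => simpa using chi_one hχ
  | cons x t ih => rw [List.prod_cons, hχ, ih]; simp

/-- Every element is a product of letters. -/
lemma exists_word (hS : Subgroup.closure S = ⊤) (g : Γ) :
    ∃ w, WChain S w ∧ w.prod = g := by
  have hg : g ∈ Subgroup.closure S := by rw [hS]; trivial
  refine Subgroup.closure_induction ?_ ?_ ?_ ?_ hg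
  · intro x hx
    exact ⟨[x], WChain.singleton (Or.inl hx), by simp⟩
  · exact ⟨[], WChain.nil, by simp⟩
  · rintro x y _ _ ⟨w₁, h₁, rfl⟩ ⟨w₂, h₂, rfl⟩
    exact ⟨w₁ ++ w₂, h₁.append h₂, by simp⟩
  · rintro x _ ⟨w, hW, rfl⟩
    obtain ⟨w', hW', hp, _⟩ := exists_inv_word hχ hW
    exact ⟨w', hW', hp⟩

lemma goodW_single {l : Γ} (h : InS S l) (h0 : 0 ≤ χ l) : GoodW S χ l := by
  refine ⟨[l], WChain.singleton h, by simp, fun n => ?_⟩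
  rcases n with _ | n
  · rw [lev_zero hχ]
  · rw [lev_of_ge hχ (by simp)]
    simpa using h0

/-- A seed: some letter has positive `χ`-value. -/
lemma exists_seed (hS : Subgroup.closure S = ⊤) {g₀ : Γ} (hg₀ : χ g₀ ≠ 0) :
    ∃ z : Γ, InS S z ∧ 0 < χ z ∧ GoodW S χ z := by
  obtain ⟨w, hW, hwp⟩ := exists_word hχ hS g₀
  have hex : ∃ l ∈ w, χ l ≠ 0 := by
    by_contra hcon
    push_neg at hcon
    apply hg₀
    rw [← hwp, chi_prod_eq_sum hχ]
    exact List.sum_eq_zero (fun a ha => by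
      obtain ⟨l, hl, rfl⟩ := List.mem_map.1 ha
      exact hcon l hl)
  obtain ⟨l, hlw, hlχ⟩ := hex
  rcases lt_or_gt_of_ne hlχ with hneg | hpos
  · refine ⟨l⁻¹, (hW l hlw).inv, ?_, goodW_single hχ (hW l hlw).inv ?_⟩ <;>
      rw [chi_inv hχ] <;> linarith
  · exact ⟨l, hW l hlw, hpos, goodW_single hχ (hW l hlw) hpos.le⟩

/-- Anything in the cone commuting with a positive good element is good. -/
lemma goodW_of_commute {z h : Γ} (hz : GoodW S χ z) (hcz : 0 < χ z)
    (hcomm : Commute z h) (hh : 0 ≤ χ h)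
    (hword : ∃ w, WChain S w ∧ w.prod = h) : GoodW S χ h := by
  obtain ⟨w, hW, hwp⟩ := hword
  set D := (w.map (fun l => |χ l|)).sum with hD
  obtain ⟨K, hK⟩ : ∃ K : ℕ, D ≤ (K : ℝ) * χ z := by
    refine ⟨Nat.ceil (D / χ z), ?_⟩
    have h1 : D / χ z ≤ (Nat.ceil (D / χ z) : ℝ) := Nat.le_ceil _
    calc D = (D / χ z) * χ z := by field_simp
    _ ≤ (Nat.ceil (D / χ z) : ℝ) * χ z := by
        exact mul_le_mul_of_nonneg_right h1 hcz.le
  have heq : z ^ K * h * (z ^ K)⁻¹ = h := by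
    rw [(hcomm.pow_left K).eq, mul_assoc, mul_inv_cancel, mul_one]
  rw [← heq]
  refine elevator hχ hz hz hW hwp K K (fun n => ?_) (by rw [heq]; exact hh)
  have := lev_ge_neg_sum hχ w n
  rw [← hD] at this
  linarith

/-- Words realizing `g` between levels `min 0 (χ g)` and beyond: available whenever
`g` or `g⁻¹` is good. -/
lemma exists_seg {g : Γ} (h : GoodW S χ g ∨ GoodW S χ g⁻¹) :
    ∃ w, WChain S w ∧ w.prod = g ∧ ∀ n, min 0 (χ g) ≤ Lev χ w n := by
  rcases h with h | h
  · obtain ⟨w, hW, rfl, hl⟩ := h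
    exact ⟨w, hW, rfl, fun n => le_trans (min_le_left _ _) (hl n)⟩
  · obtain ⟨u, hU, hup, hl⟩ := h
    obtain ⟨w, hW, hwp, hbd⟩ := exists_inv_word hχ hU
    rw [hup, inv_inv] at hwp
    refine ⟨w, hW, hwp, fun n => ?_⟩
    have := hbd 0 hl n
    rw [hup, chi_inv hχ] at this
    have hm : min 0 (χ g) ≤ χ g := min_le_right _ _
    linarith

/-- Assembling three pieces whose partial sums stay in the cone. -/
lemma goodW_of_three {h₁ h₂ h₃ : Γ}
    (H₁ : GoodW S χ h₁ ∨ GoodW S χ h₁⁻¹)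
    (H₂ : GoodW S χ h₂ ∨ GoodW S χ h₂⁻¹)
    (H₃ : GoodW S χ h₃ ∨ GoodW S χ h₃⁻¹)
    (c₁ : 0 ≤ χ h₁) (c₂ : 0 ≤ χ h₁ + χ h₂) (c₃ : 0 ≤ χ h₁ + χ h₂ + χ h₃) :
    GoodW S χ (h₁ * h₂ * h₃) := by
  obtain ⟨w₁, hW₁, hp₁, hl₁⟩ := exists_seg hχ H₁
  obtain ⟨w₂, hW₂, hp₂, hl₂⟩ := exists_seg hχ H₂
  obtain ⟨w₃, hW₃, hp₃, hl₃⟩ := exists_seg hχ H₃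
  refine ⟨w₁ ++ w₂ ++ w₃, (hW₁.append hW₂).append hW₃, by rw [List.prod_append,
    List.prod_append, hp₁, hp₂, hp₃], fun n => ?_⟩
  rw [lev_append hχ, lev_append hχ]
  simp only [List.length_append]
  rcases le_or_gt n w₁.length with hn | hn
  · have e2 : n - w₁.length = 0 := by omega
    have e3 : n - (w₁.length + w₂.length) = 0 := by omega
    rw [e2, e3, lev_zero hχ, lev_zero hχ]
    have h1 := hl₁ n
    rw [min_eq_left c₁] at h1
    linarith
  · have e1 : Lev χ w₁ n = χ h₁ := by rw [lev_of_ge hχ (by omega), hp₁]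
    rcases le_or_gt (n - w₁.length) w₂.length with hn2 | hn2
    · have e3 : n - (w₁.length + w₂.length) = 0 := by omega
      rw [e1, e3, lev_zero hχ]
      have h2 := hl₂ (n - w₁.length)
      have hm : min 0 (χ h₂) = 0 ∨ min 0 (χ h₂) = χ h₂ := min_choice _ _
      rcases hm with hm | hm <;> rw [hm] at h2 <;> linarith
    · have e2 : Lev χ w₂ (n - w₁.length) = χ h₂ := by
        rw [lev_of_ge hχ (by omega), hp₂]
      rw [e1, e2]
      have h3 := hl₃ (n - (w₁.length + w₂.length))
      have hm : min 0 (χ h₃) = 0 ∨ min 0 (χ h₃) = χ h₃ := min_choice _ _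
      rcases hm with hm | hm <;> rw [hm] at h3 <;> linarith

end Machinery2
section Machinery3

variable {Γ : Type*} [Group Γ] {S : Set Γ} {χ : Γ → ℝ}
variable (hχ : ∀ g h : Γ, χ (g * h) = χ g + χ h)

include hχ

lemma chi_zpow (g : Γ) (n : ℤ) : χ (g ^ n) = (n : ℝ) * χ g := by
  rcases n with n | n
  · simpa using chi_pow hχ g n
  · rw [zpow_negSucc, chi_inv hχ, chi_pow hχ]
    push_cast
    ring

lemma chi_conj (g h : Γ) : χ (h * g * h⁻¹) = χ g := by
  rw [hχ, hχ, chi_inv hχ]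
  ring

lemma sum_abs_nonneg (w : List Γ) : 0 ≤ (w.map (fun l => |χ l|)).sum :=
  List.sum_nonneg (fun x hx => by
    obtain ⟨l, _, rfl⟩ := List.mem_map.1 hx
    exact abs_nonneg _)

/-- Words for conjugates `p^i θ p^{-i}` with dips bounded uniformly in `i`,
provided `0 ≤ χ p`. -/
lemma exists_conj_word {p θ : Γ} (hp : 0 ≤ χ p) {wp wθ : List Γ}
    (hWp : WChain S wp) (hWθ : WChain S wθ) (hpp : wp.prod = p) (hpθ : wθ.prod = θ) :
    ∃ B : ℝ, ∀ i : ℕ, ∃ w, WChain S w ∧ w.prod = p ^ i * θ * (p ^ i)⁻¹ ∧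
      ∀ n, B ≤ Lev χ w n := by
  set Dp := (wp.map (fun l => |χ l|)).sum with hDp
  set Dθ := (wθ.map (fun l => |χ l|)).sum with hDθ
  have hDp0 : 0 ≤ Dp := sum_abs_nonneg hχ wp
  have hDθ0 : 0 ≤ Dθ := sum_abs_nonneg hχ wθ
  refine ⟨-(Dp + Dθ + |χ θ|), fun i => ?_⟩
  have pow_word : ∃ wi, WChain S wi ∧ wi.prod = p ^ i ∧ ∀ n, -Dp ≤ Lev χ wi n := by
    induction i with
    | zero =>
        refine ⟨[], WChain.nil, by simp, fun n => ?_⟩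
        simp only [Lev, List.take_nil, List.prod_nil, chi_one hχ]
        linarith
    | succ i ih =>
        obtain ⟨wi, hWi, hpi, hli⟩ := ih
        refine ⟨wp ++ wi, hWp.append hWi, by rw [List.prod_append, hpp, hpi, ← pow_succ'],
          fun n => ?_⟩
        rw [lev_append hχ]
        rcases le_or_gt n wp.length with hn | hn
        · have e : n - wp.length = 0 := by omega
          rw [e, lev_zero hχ]
          have := lev_ge_neg_sum hχ wp n
          rw [← hDp] at this
          linarith
        · have e : Lev χ wp n = χ p := by rw [lev_of_ge hχ (by omega), hpp]
          rw [e]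
          have := hli (n - wp.length)
          linarith
  obtain ⟨wi, hWi, hpi, hli⟩ := pow_word
  obtain ⟨w₃, hW₃, hw₃p, hl₃⟩ := exists_inv_word hχ hWi
  refine ⟨wi ++ wθ ++ w₃, (hWi.append hWθ).append hW₃, by
    rw [List.prod_append, List.prod_append, hpi, hpθ, hw₃p, hpi], fun n => ?_⟩
  have hχpi : χ (p ^ i) = (i : ℝ) * χ p := chi_pow hχ p i
  have hχpi0 : 0 ≤ χ (p ^ i) := by
    rw [hχpi]
    positivity
  have hl3 := hl₃ (-Dp) hli
  rw [hpi] at hl3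
  rw [lev_append hχ, lev_append hχ]
  simp only [List.length_append]
  rcases le_or_gt n wi.length with hn | hn
  · have e2 : n - wi.length = 0 := by omega
    have e3 : n - (wi.length + wθ.length) = 0 := by omega
    rw [e2, e3, lev_zero hχ, lev_zero hχ]
    have := hli n
    have := abs_nonneg (χ θ)
    linarith
  · have e1 : Lev χ wi n = χ (p ^ i) := by rw [lev_of_ge hχ (by omega), hpi]
    rcases le_or_gt (n - wi.length) wθ.length with hn2 | hn2
    · have e3 : n - (wi.length + wθ.length) = 0 := by omega
      rw [e1, e3, lev_zero hχ]
      have := lev_ge_neg_sum hχ wθ (n - wi.length)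
      rw [← hDθ] at this
      have := abs_nonneg (χ θ)
      linarith
    · have e2 : Lev χ wθ (n - wi.length) = χ θ := by
        rw [lev_of_ge hχ (by omega), hpθ]
      rw [e1, e2]
      have h3 := hl3 (n - (wi.length + wθ.length))
      have := neg_abs_le (χ θ)
      linarith

end Machinery3
/-! ### Specifics for `G_y` -/

/-- The generator `x_s` as an element of `G_y`. -/
def xel (s : List Bool) : ↥Gy := ⟨px s, px_mem gySet s⟩

/-- The generator `y_t` as an element of `G_y`. -/
def yel (t : List Bool) (ht : t ∈ gySet) : ↥Gy := ⟨py t, py_mem ht⟩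

lemma allFalse_replicate (j : ℕ) : allFalse (List.replicate j false) :=
  fun _ hb => List.eq_of_mem_replicate hb
lemma allTrue_replicate (j : ℕ) : allTrue (List.replicate j true) :=
  fun _ hb => List.eq_of_mem_replicate hb
lemma not_allFalse_rep_true {j : ℕ} (hj : 1 ≤ j) : ¬ allFalse (List.replicate j true) := by
  intro h
  have := h true (by
    rw [show List.replicate j true = true :: List.replicate (j-1) true by
      rw [← List.replicate_succ, show j - 1 + 1 = j by omega]]
    exact List.mem_cons_self)
  simp at this
lemma not_allTrue_rep_false {j : ℕ} (hj : 1 ≤ j) : ¬ allTrue (List.replicate j false) := by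
  intro h
  have := h false (by
    rw [show List.replicate j false = false :: List.replicate (j-1) false by
      rw [← List.replicate_succ, show j - 1 + 1 = j by omega]]
    exact List.mem_cons_self)
  simp at this

lemma rep_true_mem_gySet {j : ℕ} (hj : 1 ≤ j) : List.replicate j true ∈ gySet :=
  not_allFalse_rep_true hj

lemma one_mem_gySet : [true] ∈ gySet := by
  have : [true] = List.replicate 1 true := rfl
  rw [this]
  exact rep_true_mem_gySet le_rfl

lemma hasPrefix_singleton {b : Bool} {ξ : Seq} : hasPrefix [b] ξ ↔ ξ 0 = b := by
  constructor
  · intro h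
    simpa using h ⟨0, by simp⟩
  · intro h i
    have h1 : (i : ℕ) < 1 := by simpa using i.isLt
    have hi : i = ⟨0, by simp⟩ := Fin.ext (by
      show (i : ℕ) = 0
      omega)
    rw [hi]
    simpa using h

lemma commute_cone01 {g h : M} (hg : SuppIn [false] g) (hh : SuppIn [true] h) :
    g * h = h * g := by
  apply commute_suppIn_fix hg
  intro ξ hξ
  apply hh
  rw [hasPrefix_singleton] at hξ ⊢
  simp [hξ]

lemma commute_deep_fix {T : ℕ} {g h : M} (hg : SuppIn (List.replicate T true) g)
    (hh : ∀ N, T ≤ N → ∀ η, act h (oc N η) = oc N η) : g * h = h * g := by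
  apply commute_suppIn_fix hg
  intro ξ hξ
  obtain ⟨ζ, rfl⟩ := eq_oc_of_hasPrefix hξ
  exact hh T le_rfl ζ

lemma commute_of_val {z h : ↥Gy} (hc : z.val * h.val = h.val * z.val) : Commute z h := by
  apply Subtype.ext
  rw [Subgroup.coe_mul, Subgroup.coe_mul, hc]

@[simp] lemma xel_val (s : List Bool) : (xel s).val = px s := rfl
@[simp] lemma yel_val (t : List Bool) (ht : t ∈ gySet) : (yel t ht).val = py t := rfl

lemma val_pow (g : ↥Gy) (n : ℕ) : ((g ^ n : ↥Gy) : M) = (g : M) ^ n := by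
  exact_mod_cast rfl
lemma val_zpow (g : ↥Gy) (n : ℤ) : ((g ^ n : ↥Gy) : M) = (g : M) ^ n := by
  exact_mod_cast rfl

lemma rep_one_false : List.replicate 1 false = [false] := rfl
lemma rep_one_true : List.replicate 1 true = [true] := rfl

/-- The basic deepening conjugation: `x_0 x_{0^R} x_0⁻¹ = x_{0^{R+1}}`. -/
lemma P_conj_base {R : ℕ} (hR : 3 ≤ R) :
    px [false] * px (List.replicate R false) * (px [false])⁻¹
      = px (List.replicate (R+1) false) := by
  apply M_ext
  intro ξ
  rw [act_mul, act_mul]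
  by_cases hp : hasPrefix (List.replicate (R+1) false) ξ
  · obtain ⟨ζ, rfl⟩ := eq_zc_of_hasPrefix hp
    have h1 : act (px [false]) (zc (R+1) ζ) = zc R ζ := by
      rw [← rep_one_false, px_zc (by omega), Nat.add_sub_cancel]
    have h2 : act (px (List.replicate R false)) (zc R ζ) = zc R (xFun ζ) := by
      rw [act_px, show zc R ζ = append (List.replicate R false) ζ from rfl, localize_append]
      rfl
    have h3 : act (px [false])⁻¹ (zc R (xFun ζ)) = zc (R+1) (xFun ζ) := by
      rw [← rep_one_false, px_inv_zc (by omega)]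
    have h4 : act (px (List.replicate (R+1) false)) (zc (R+1) ζ) = zc (R+1) (xFun ζ) := by
      rw [act_px, show zc (R+1) ζ = append (List.replicate (R+1) false) ζ from rfl,
        localize_append]
      rfl
    rw [h1, h2, h3, h4]
  · have hnp : ¬ hasPrefix (List.replicate R false) (act (px [false]) ξ) := by
      intro hpre
      obtain ⟨ζ, hζ⟩ := eq_zc_of_hasPrefix hpre
      have hx : ξ = act (px [false])⁻¹ (zc R ζ) := by
        rw [← hζ, act_inv_act]
      rw [← rep_one_false, px_inv_zc (by omega)] at hx
      exact hp (hx ▸ hasPrefix_rep_zc le_rfl ζ)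
    have e1 : act (px (List.replicate R false)) (act (px [false]) ξ) = act (px [false]) ξ := by
      rw [act_px]
      exact localize_not_prefix _ _ hnp
    have e2 : act (px (List.replicate (R+1) false)) ξ = ξ := by
      rw [act_px]
      exact localize_not_prefix _ _ hp
    rw [e1, act_inv_act, e2]
lemma exists_nat_mul_ge {ε D : ℝ} (hε : 0 < ε) : ∃ K : ℕ, D ≤ (K : ℝ) * ε := by
  refine ⟨Nat.ceil (D / ε), ?_⟩
  calc D = (D / ε) * ε := by field_simp
  _ ≤ (Nat.ceil (D/ε) : ℝ) * ε := mul_le_mul_of_nonneg_right (Nat.le_ceil _) hε.le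

lemma conj_mul_of_commute {G : Type*} [Group G] {p y θ θ' : G}
    (hcomm : y * θ = θ * y) (hbase : p * θ * p⁻¹ = θ') :
    (p * y) * θ * (p * y)⁻¹ = θ' := by
  have h1 : (p * y) * θ * (p * y)⁻¹ = p * (y * θ * y⁻¹) * p⁻¹ := by
    group
  rw [h1, hcomm, show θ * y * y⁻¹ = θ by group]
  exact hbase

section MainProof

variable {χT : ↥Gy → ℝ} {a b : ℝ} {S : Set ↥Gy}

variable (hadd : ∀ g h : ↥Gy, χT (g * h) = χT g + χT h)
variable (ha : a ≠ 0) (hb : b ≠ 0)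
variable (hx0 : ∀ j : ℕ, χT (xel (List.replicate j false)) = -a)
variable (hy1 : ∀ (j : ℕ) (h : List.replicate j true ∈ gySet), χT (yel _ h) = b)
variable (hSgen : Subgroup.closure S = ⊤)

include hadd ha hb hx0 hy1 hSgen

lemma exists_Z0 : ∃ Z : ↥Gy, GoodW S χT Z ∧ 0 < χT Z ∧ SuppIn [false] Z.val := by
  classical
  -- seed
  have hseed : χT (xel (List.replicate 0 false)) ≠ 0 := by
    rw [hx0]
    exact neg_ne_zero.2 ha
  obtain ⟨sp, hspS, hspPos, hspGood⟩ := exists_seed hadd hSgen hseed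
  obtain ⟨⟨u, v, hG0⟩, -⟩ := pkgM_of_mem sp.2
  -- the exponent t
  obtain ⟨n, hn⟩ := exists_nat_gt (|a| / |b|)
  have hbne : (0:ℝ) < |b| := abs_pos.2 hb
  have h1 : |a| < (n : ℝ) * |b| := by
    rw [div_lt_iff₀ hbne] at hn
    linarith
  set t : ℤ := if 0 < b then (n : ℤ) else -(n : ℤ) with ht
  have htb : |a| < (t : ℝ) * b := by
    rcases lt_or_gt_of_ne hb with hbneg | hbpos
    · rw [ht, if_neg (by linarith)]
      push_cast
      rw [abs_of_neg hbneg] at h1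
      nlinarith
    · rw [ht, if_pos hbpos]
      push_cast
      rw [abs_of_pos hbpos] at h1
      linarith
  set Y : ↥Gy := yel [true] one_mem_gySet with hY
  set P2 : ↥Gy := xel [false] * Y ^ t with hP2
  have hYb : χT Y = b := hy1 1 one_mem_gySet
  have hP2pos : 0 < χT P2 := by
    rw [hP2, hadd, show [false] = List.replicate 1 false from rfl, hx0,
      chi_zpow hadd, hYb]
    have := le_abs_self a
    linarith
  -- orientation
  set σ : ℤ := if a < 0 then 1 else -1 with hσdef
  have hσpos : ∀ j : ℕ, 0 < χT ((xel (List.replicate j false)) ^ σ) := by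
    intro j
    rw [chi_zpow hadd, hx0]
    rcases lt_or_gt_of_ne ha with h | h
    · rw [hσdef, if_pos h]
      push_cast
      linarith
    · rw [hσdef, if_neg (by linarith)]
      push_cast
      linarith
  -- conjugation identities
  have conj_one : ∀ R : ℕ, 3 ≤ R →
      P2 * (xel (List.replicate R false)) ^ σ * P2⁻¹
        = (xel (List.replicate (R+1) false)) ^ σ := by
    intro R hR
    have hcommval : (py [true]) ^ t * px (List.replicate R false)
        = px (List.replicate R false) * (py [true]) ^ t := by
      refine (commute_cone01 ?_ ?_).symm
      · exact suppIn_px ⟨List.replicate (R-1) false, by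
          rw [List.singleton_append, ← List.replicate_succ, show R - 1 + 1 = R by omega]⟩
      · exact SuppIn.zpow (suppIn_py (by simp)) t
    have hval : P2.val * px (List.replicate R false) * P2.val⁻¹
        = px (List.replicate (R+1) false) := by
      have hv : P2.val = px [false] * (py [true]) ^ t := by
        rw [hP2, Subgroup.coe_mul, xel_val, val_zpow, hY, yel_val]
      rw [hv]
      exact conj_mul_of_commute hcommval (P_conj_base hR)
    have base : P2 * xel (List.replicate R false) * P2⁻¹
        = xel (List.replicate (R+1) false) := by
      apply Subtype.ext
      rw [Subgroup.coe_mul, Subgroup.coe_mul, Subgroup.coe_inv, xel_val, xel_val]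
      exact hval
    calc P2 * (xel (List.replicate R false)) ^ σ * P2⁻¹
        = (MulAut.conj P2) ((xel (List.replicate R false)) ^ σ) := by
          rw [MulAut.conj_apply]
      _ = ((MulAut.conj P2) (xel (List.replicate R false))) ^ σ := map_zpow _ _ _
      _ = (xel (List.replicate (R+1) false)) ^ σ := by
          rw [MulAut.conj_apply, base]
  have conj_iter : ∀ i : ℕ, P2 ^ i * (xel (List.replicate 3 false)) ^ σ * (P2 ^ i)⁻¹
      = (xel (List.replicate (3+i) false)) ^ σ := by
    intro i
    induction i with
    | zero => simp
    | succ i ih =>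
        have h1 : P2 ^ (i+1) * (xel (List.replicate 3 false)) ^ σ * (P2 ^ (i+1))⁻¹
            = P2 * (P2 ^ i * (xel (List.replicate 3 false)) ^ σ * (P2 ^ i)⁻¹) * P2⁻¹ := by
          rw [pow_succ']
          group
        rw [h1, ih, conj_one (3+i) (by omega), show 3 + i + 1 = 3 + (i+1) by omega]
  -- words and the uniform bound
  obtain ⟨wθ, hWθ, hwθ⟩ := exists_word hadd hSgen ((xel (List.replicate 3 false)) ^ σ)
  obtain ⟨wp, hWp, hwp⟩ := exists_word hadd hSgen P2
  obtain ⟨B, hB⟩ := exists_conj_word hadd hP2pos.le hWp hWθ hwp hwθ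
  -- the exponent K
  obtain ⟨K, hK⟩ := exists_nat_mul_ge (D := -B) hspPos
  -- the threshold and depth
  obtain ⟨A1, hA1⟩ : Germ0 ((sp.val) ^ K)⁻¹ (K*v) (K*u) := (hG0.pow K).inv
  set i : ℕ := A1 + K * v + 1 with hi
  set R : ℕ := 3 + i with hRdef
  obtain ⟨wm, hWm, hwmp, hlm⟩ := hB i
  set m : ↥Gy := P2 ^ i * (xel (List.replicate 3 false)) ^ σ * (P2 ^ i)⁻¹ with hm
  have hmval : m = (xel (List.replicate R false)) ^ σ := conj_iter i
  set Z : ↥Gy := sp ^ K * m * (sp ^ K)⁻¹ with hZ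
  have hχm : χT m = χT ((xel (List.replicate 3 false)) ^ σ) := by
    rw [hm]
    exact chi_conj hadd _ _
  have hZpos : 0 < χT Z := by
    rw [hZ, chi_conj hadd, hχm]
    exact hσpos 3
  refine ⟨Z, ?_, hZpos, ?_⟩
  · -- goodness via the elevator
    have hgood := elevator hadd hspGood hspGood hWm hwmp K K
      (fun k => by
        have := hlm k
        linarith)
      (by rw [← hZ]; exact hZpos.le)
    rw [hZ]
    exact hgood
  · -- support in the zero cone
    intro ξ hξ
    have hZval : Z.val = (sp.val) ^ K * m.val * ((sp.val) ^ K)⁻¹ := by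
      rw [hZ, Subgroup.coe_mul, Subgroup.coe_mul, Subgroup.coe_inv, val_pow]
    rw [hZval, act_mul, act_mul]
    by_cases hpre : hasPrefix (List.replicate R false) (act ((sp.val) ^ K) ξ)
    · exfalso
      obtain ⟨ζ, hζ⟩ := eq_zc_of_hasPrefix hpre
      have hxi : ξ = act (((sp.val) ^ K))⁻¹ (zc R ζ) := by
        rw [← hζ, act_inv_act]
      have hzcR : zc R ζ = zc ((A1 + 4) + K * v) ζ := by
        rw [show R = (A1 + 4) + K * v by rw [hRdef, hi]; omega]
      rw [hzcR, hA1 (A1+4) (by omega)] at hxi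
      apply hξ
      rw [hxi, ← rep_one_false]
      exact hasPrefix_rep_zc (by omega) ζ
    · have hsupp : SuppIn (List.replicate R false) m.val := by
        rw [hmval, val_zpow, xel_val]
        exact SuppIn.zpow (suppIn_px (List.prefix_refl _)) σ
      rw [hsupp _ hpre, act_inv_act]

end MainProof
section MainProof2

variable {χT : ↥Gy → ℝ} {a b : ℝ} {S : Set ↥Gy}

variable (hadd : ∀ g h : ↥Gy, χT (g * h) = χT g + χT h)
variable (ha : a ≠ 0) (hb : b ≠ 0)
variable (hx0 : ∀ j : ℕ, χT (xel (List.replicate j false)) = -a)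
variable (hy1 : ∀ (j : ℕ) (h : List.replicate j true ∈ gySet), χT (yel _ h) = b)
variable (hSgen : Subgroup.closure S = ⊤)

include hadd ha hb hx0 hy1 hSgen

/-- Anything in the cone supported in the all-one cone is good. -/
lemma good_supp1 (h : ↥Gy) (hsupp : SuppIn [true] (h : M)) (hh : 0 ≤ χT h) :
    GoodW S χT h := by
  obtain ⟨Z, hZg, hZp, hZs⟩ := exists_Z0 hadd ha hb hx0 hy1 hSgen
  exact goodW_of_commute hadd hZg hZp (commute_of_val (commute_cone01 hZs hsupp))
    hh (exists_word hadd hSgen h)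

/-- Anything in the cone which is trivial on a deep all-one cone is good. -/
lemma good_deep1 (h : ↥Gy) (T : ℕ)
    (htriv : ∀ N, T ≤ N → ∀ η, act (h : M) (oc N η) = oc N η) (hh : 0 ≤ χT h) :
    GoodW S χT h := by
  classical
  set T' := max T 1 with hT'
  set τ : ℤ := if 0 < b then 1 else -1 with hτ
  have hmem : List.replicate T' true ∈ gySet := rep_true_mem_gySet (le_max_right _ _)
  set YT : ↥Gy := (yel _ hmem) ^ τ with hYT
  have hYTsupp1 : SuppIn [true] (YT : M) := by
    rw [hYT, val_zpow, yel_val]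
    refine SuppIn.zpow (suppIn_py ?_) τ
    refine ⟨List.replicate (T'-1) true, ?_⟩
    rw [List.singleton_append, ← List.replicate_succ,
      show T' - 1 + 1 = T' by rw [hT']; omega]
  have hYTsuppT : SuppIn (List.replicate T true) (YT : M) := by
    rw [hYT, val_zpow, yel_val]
    refine SuppIn.zpow (suppIn_py ?_) τ
    refine ⟨List.replicate (T'-T) true, ?_⟩
    rw [← List.replicate_add, show T + (T' - T) = T' by rw [hT']; omega]
  have hYTpos : 0 < χT YT := by
    rw [hYT, chi_zpow hadd, hy1 T' hmem]
    rcases lt_or_gt_of_ne hb with hbn | hbp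
    · rw [hτ, if_neg (by linarith)]
      push_cast
      linarith
    · rw [hτ, if_pos hbp]
      push_cast
      linarith
  have hYTgood : GoodW S χT YT := good_supp1 hadd ha hb hx0 hy1 hSgen YT hYTsupp1 hYTpos.le
  have hcomm : (YT : M) * (h : M) = (h : M) * (YT : M) := by
    apply commute_deep_fix hYTsuppT
    intro N hN η
    exact htriv N hN η
  exact goodW_of_commute hadd hYTgood hYTpos (commute_of_val hcomm) hh
    (exists_word hadd hSgen h)

/-- Every element of the cone is good. -/
lemma main_good (g : ↥Gy) (hg : 0 ≤ χT g) : GoodW S χT g := by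
  obtain ⟨-, c, hc, A1, hA1⟩ := pkgM_of_mem g.2
  set c₁ : ↥Gy := ⟨c, hc.1⟩ with hc₁def
  have hc₁supp : SuppIn [true] (c₁ : M) := hc.2.1
  have Hc₁or : 0 ≤ χT c₁ → GoodW S χT c₁ :=
    fun h => good_supp1 hadd ha hb hx0 hy1 hSgen c₁ hc₁supp h
  have Hc₁inv : χT c₁ < 0 → GoodW S χT c₁⁻¹ := by
    intro h
    refine good_supp1 hadd ha hb hx0 hy1 hSgen c₁⁻¹ ?_ ?_
    · rw [Subgroup.coe_inv]
      exact hc₁supp.inv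
    · rw [chi_inv hadd]
      linarith
  rcases le_or_gt (χT c₁) (χT g) with hβ | hβ
  · -- spell the deep-trivial part first, then c₁
    set m'' : ↥Gy := g * c₁⁻¹ with hm''
    have hm''val : (m'' : M) = (g : M) * (c : M)⁻¹ := by
      rw [hm'', Subgroup.coe_mul, Subgroup.coe_inv, hc₁def]
    have htriv : ∀ N, A1 ≤ N → ∀ η, act (m'' : M) (oc N η) = oc N η := by
      intro N hN η
      rw [hm''val, act_mul, hA1 N hN η, act_inv_act]
    have hχm'' : χT m'' + χT c₁ = χT g := by
      rw [← hadd, show m'' * c₁ = g by rw [hm'']; group]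
    have Hm : GoodW S χT m'' := good_deep1 hadd ha hb hx0 hy1 hSgen m'' A1 htriv
      (by linarith)
    have Hc : GoodW S χT c₁ ∨ GoodW S χT c₁⁻¹ := by
      rcases le_or_gt 0 (χT c₁) with h | h
      · exact Or.inl (Hc₁or h)
      · exact Or.inr (Hc₁inv h)
    have hdecomp : g = m'' * c₁ * 1 := by rw [hm'']; group
    rw [hdecomp]
    refine goodW_of_three hadd (Or.inl Hm) Hc (Or.inl (GoodW.one hadd)) (by linarith) ?_ ?_
    · rw [hχm'']
      exact hg
    · rw [chi_one hadd, hχm'']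
      simpa using hg
  · -- here χT c₁ > χT g ≥ 0: spell c₁ first, then the inverse-good deep-trivial part
    have hβ0 : 0 ≤ χT c₁ := le_trans hg hβ.le
    set m' : ↥Gy := c₁⁻¹ * g with hm'
    have hm'val : (m' : M) = (c : M)⁻¹ * (g : M) := by
      rw [hm', Subgroup.coe_mul, Subgroup.coe_inv, hc₁def]
    obtain ⟨R, hR⟩ := hc.2.2.2 (max A1 1)
    have htriv : ∀ N, max R 1 ≤ N → ∀ η, act (m' : M) (oc N η) = oc N η := by
      intro N hN η
      rw [hm'val, act_mul]
      obtain ⟨N', hN', η', hη'⟩ := hR N (le_trans (le_max_left _ _) hN) η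
      rw [hη', hA1 N' (le_trans (le_max_left _ _) hN') η', ← hη', act_act_inv]
    have htrivinv : ∀ N, max R 1 ≤ N → ∀ η, act ((m'⁻¹ : ↥Gy) : M) (oc N η) = oc N η := by
      intro N hN η
      rw [Subgroup.coe_inv]
      conv_lhs => rw [← htriv N hN η]
      exact act_inv_act _ _
    have hχm' : χT c₁ + χT m' = χT g := by
      rw [← hadd, show c₁ * m' = g by rw [hm']; group]
    have Hm : GoodW S χT m'⁻¹ := good_deep1 hadd ha hb hx0 hy1 hSgen m'⁻¹ (max R 1)
      htrivinv (by rw [chi_inv hadd]; linarith)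
    have hdecomp : g = c₁ * m' * 1 := by rw [hm']; group
    rw [hdecomp]
    refine goodW_of_three hadd (Or.inl (Hc₁or hβ0)) (Or.inr Hm)
      (Or.inl (GoodW.one hadd)) hβ0 ?_ ?_
    · rw [hχm']
      exact hg
    · rw [chi_one hadd, hχm']
      simpa using hg

end MainProof2
/-- Let `χ = aχ₀ + bψ₁ + cψ` be a character of `G_y` with `c = 0`, `a ≠ 0` and `b ≠ 0`.
Then `[χ] ∈ Σ¹(G_y)`: for any finite generating set `S` of `G_y`, the full subgraph of
the Cayley graph spanned by `{h : χ(h) ≥ 0}` is connected. -/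
theorem most_of_equator_Gy
    (χ0 ψ1 ψ : ↥Gy → ℝ) (h0 : Chi0Spec gySet χ0) (h1 : Psi1Spec gySet ψ1)
    (h : PsiSpec gySet ψ) (a b c : ℝ) (hc : c = 0) (ha : a ≠ 0) (hb : b ≠ 0) :
    ∀ S : Set ↥Gy, S.Finite → Subgroup.closure S = ⊤ →
      (posSubgraph S (fun g => a * χ0 g + b * ψ1 g + c * ψ g)).Connected := by
  subst hc
  intro S _hSfin hSgen
  set χT : ↥Gy → ℝ := fun g => a * χ0 g + b * ψ1 g + 0 * ψ g with hχTdef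
  have hadd : ∀ g₁ g₂ : ↥Gy, χT (g₁ * g₂) = χT g₁ + χT g₂ := by
    intro g₁ g₂
    simp only [hχTdef]
    rw [show χ0 (g₁ * g₂) = χ0 g₁ + χ0 g₂ from h0.1 g₁ g₂,
      show ψ1 (g₁ * g₂) = ψ1 g₁ + ψ1 g₂ from h1.1 g₁ g₂, show ψ (g₁ * g₂) = ψ g₁ + ψ g₂ from h.1 g₁ g₂]
    ring
  have hx0 : ∀ j : ℕ, χT (xel (List.replicate j false)) = -a := by
    intro j
    simp only [hχTdef]
    rw [show χ0 (xel (List.replicate j false)) = -1 from h0.2.1 _ (allFalse_replicate j),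
      show ψ1 (xel (List.replicate j false)) = 0 from h1.2.1 _]
    ring
  have hy1 : ∀ (j : ℕ) (hmem : List.replicate j true ∈ gySet),
      χT (yel _ hmem) = b := by
    intro j hmem
    simp only [hχTdef]
    rw [show χ0 (yel (List.replicate j true) hmem) = 0 from h0.2.2.2 _ hmem,
      show ψ1 (yel (List.replicate j true) hmem) = 1 from h1.2.2.1 _ hmem (allTrue_replicate j)]
    ring
  have hone : 0 ≤ χT 1 := le_of_eq (chi_one hadd).symm
  -- every good element is reachable from the identity vertex
  have key : ∀ (w : List ↥Gy), WChain S w → (∀ n, 0 ≤ Lev χT w n) →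
      ∀ (hp : 0 ≤ χT w.prod),
        (posSubgraph S χT).Reachable ⟨1, hone⟩ ⟨w.prod, hp⟩ := by
    intro w
    induction w using List.reverseRecOn with
    | nil =>
        intro _ _ hp
        have he : (⟨List.prod [], hp⟩ : {h : ↥Gy // 0 ≤ χT h}) = ⟨1, hone⟩ :=
          Subtype.ext (by simp)
        rw [he]
    | append_singleton w l ih =>
        intro hW hl hp
        have hWw : WChain S w := fun x hx => hW x (by simp [hx])
        have hInS : InS S l := hW l (by simp)
        have hprodeq : (w ++ [l]).prod = w.prod * l := by
          rw [List.prod_append, List.prod_cons, List.prod_nil, mul_one]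
        have hlevw : ∀ n, 0 ≤ Lev χT w n := by
          intro n
          rcases le_or_gt n w.length with hn | hn
          · have := hl n
            rw [lev_append hadd, show n - w.length = 0 by omega, lev_zero hadd] at this
            linarith
          · rw [lev_of_ge hadd (by omega)]
            have := hl w.length
            rw [lev_append hadd, show w.length - w.length = 0 by omega, lev_zero hadd,
              lev_of_ge hadd le_rfl] at this
            linarith
        have hpw : 0 ≤ χT w.prod := by
          have := hlevw w.length
          rwa [lev_of_ge hadd le_rfl] at this
        have ihr := ih hWw hlevw hpw
        have hp' : 0 ≤ χT (w.prod * l) := by rwa [hprodeq] at hp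
        have he : (⟨(w ++ [l]).prod, hp⟩ : {h : ↥Gy // 0 ≤ χT h}) = ⟨w.prod * l, hp'⟩ :=
          Subtype.ext (by simp [hprodeq])
        rw [he]
        by_cases hid : w.prod * l = w.prod
        · have he2 : (⟨w.prod * l, hp'⟩ : {h : ↥Gy // 0 ≤ χT h}) = ⟨w.prod, hpw⟩ :=
            Subtype.ext (by simp [hid])
          rw [he2]
          exact ihr
        · refine ihr.trans (SimpleGraph.Adj.reachable ?_)
          refine ⟨?_, l, hInS, rfl⟩
          intro hcon
          apply hid
          have := Subtype.ext_iff.1 hcon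
          simp at this
          rw [this, mul_one]
  -- conclude
  have reach1 : ∀ u : {h : ↥Gy // 0 ≤ χT h},
      (posSubgraph S χT).Reachable ⟨1, hone⟩ u := by
    rintro ⟨g, hg⟩
    obtain ⟨w, hW, hprod, hlev⟩ := main_good hadd ha hb hx0 hy1 hSgen g hg
    have hp : 0 ≤ χT w.prod := by rwa [hprod]
    have := key w hW hlev hp
    have he : (⟨w.prod, hp⟩ : {h : ↥Gy // 0 ≤ χT h}) = ⟨g, hg⟩ :=
      Subtype.ext (by simp [hprod])
    rwa [he] at this
  have hpre : (posSubgraph S χT).Preconnected := by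
    intro u v
    exact (reach1 u).symm.trans (reach1 v)
  haveI : Nonempty {h : ↥Gy // 0 ≤ χT h} := ⟨⟨1, hone⟩⟩
  exact ⟨hpre⟩

end LodhaMoore
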